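/- Let n ≥ 5, 0 < s < 2, 2⋆(s) = 2(n-s)/(n-2), and U₁(X) = κ_{n,s}(1+|X|^{2-s})^{-(n-2)/(2-s)} with κ_{n,s} = ((n-s)(n-2))^{(n-2)/(2(2-s))}. Then ∫_{ℝⁿ} |X|^{2-s} U₁^{2⋆(s)} dX / ∫_{ℝⁿ} U₁² dX = κ_{n,s}^{2⋆(s)-2} · n(n-4) / (2(n-2)(2n-2-s)). -/

import Mathlib

open MeasureTheory

noncomputable def kappa (n : ℕ) (s : ℝ) : ℝ :=
  (((n : ℝ) - s) * ((n : ℝ) - 2)) ^ (((n : ℝ) - 2) / (2 * (2 - s)))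

noncomputable def U1 (n : ℕ) (s : ℝ) (X : EuclideanSpace ℝ (Fin n)) : ℝ :=
  kappa n s * (1 + ‖X‖ ^ (2 - s)) ^ (-(((n : ℝ) - 2) / (2 - s)))

/-- The critical Hardy-Sobolev exponent `2⋆(s)`. -/
noncomputable def critExp (n : ℕ) (s : ℝ) : ℝ := 2 * ((n : ℝ) - s) / ((n : ℝ) - 2)

section Aux
open Real Set Filter Topology

noncomputable def Jint (α β : ℝ) : ℝ := ∫ u in Ioi (0:ℝ), u ^ (α - 1) * (1 + u) ^ (-β)

lemma Jint_integrable {α β : ℝ} (hα : 0 < α) (hαβ : α < β) :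
    IntegrableOn (fun u : ℝ => u ^ (α - 1) * (1 + u) ^ (-β)) (Ioi 0) := by
  have hmeas : AEStronglyMeasurable (fun u : ℝ => u ^ (α - 1) * (1 + u) ^ (-β))
      (volume.restrict (Ioi (0:ℝ))) := by
    apply Measurable.aestronglyMeasurable
    fun_prop
  have h1 : IntegrableOn (fun u : ℝ => u ^ (α - 1) * (1 + u) ^ (-β)) (Ioc 0 1) := by
    have hb : IntegrableOn (fun u : ℝ => u ^ (α - 1)) (Ioc (0:ℝ) 1) := by
      have := intervalIntegral.intervalIntegrable_rpow' (a := (0:ℝ)) (b := 1)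
        (r := α - 1) (by linarith)
      rwa [intervalIntegrable_iff_integrableOn_Ioc_of_le zero_le_one] at this
    refine Integrable.mono' hb (hmeas.mono_set Ioc_subset_Ioi_self) ?_
    filter_upwards [ae_restrict_mem measurableSet_Ioc] with u hu
    have hu0 : 0 < u := hu.1
    rw [Real.norm_eq_abs, abs_of_nonneg (by positivity)]
    have : (1 + u) ^ (-β) ≤ 1 := by
      apply Real.rpow_le_one_of_one_le_of_nonpos (by linarith) (by linarith)
    calc u ^ (α - 1) * (1 + u) ^ (-β) ≤ u ^ (α - 1) * 1 := by
          apply mul_le_mul_of_nonneg_left this (by positivity)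
      _ = u ^ (α - 1) := mul_one _
  have h2 : IntegrableOn (fun u : ℝ => u ^ (α - 1) * (1 + u) ^ (-β)) (Ioi 1) := by
    have hb : IntegrableOn (fun u : ℝ => u ^ (α - 1 - β)) (Ioi (1:ℝ)) :=
      integrableOn_Ioi_rpow_of_lt (by linarith) one_pos
    refine Integrable.mono' hb (hmeas.mono_set (Ioi_subset_Ioi zero_le_one)) ?_
    filter_upwards [ae_restrict_mem measurableSet_Ioi] with u hu
    have hu1 : (1:ℝ) < u := hu
    have hu0 : 0 < u := by linarith
    rw [Real.norm_eq_abs, abs_of_nonneg (by positivity)]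
    have : (1 + u) ^ (-β) ≤ u ^ (-β) := by
      apply Real.rpow_le_rpow_of_nonpos hu0 (by linarith) (by linarith)
    calc u ^ (α - 1) * (1 + u) ^ (-β) ≤ u ^ (α - 1) * u ^ (-β) :=
          mul_le_mul_of_nonneg_left this (by positivity)
      _ = u ^ (α - 1 - β) := by rw [← Real.rpow_add hu0]; ring_nf
  have : (Ioi (0:ℝ)) = Ioc 0 1 ∪ Ioi 1 := (Ioc_union_Ioi_eq_Ioi zero_le_one).symm
  rw [this]
  exact h1.union h2

lemma Jint_pos {α β : ℝ} (hα : 0 < α) (hαβ : α < β) : 0 < Jint α β := by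
  rw [Jint]
  apply (setIntegral_pos_iff_support_of_nonneg_ae ?_ (Jint_integrable hα hαβ)).2
  · have : (Function.support fun u : ℝ => u ^ (α - 1) * (1 + u) ^ (-β)) ∩ Ioi 0 = Ioi 0 := by
      apply inter_eq_right.2
      intro u hu
      have hu0 : (0:ℝ) < u := hu
      simp only [Function.mem_support]
      positivity
    rw [this]
    simp
  · filter_upwards [ae_restrict_mem measurableSet_Ioi] with u hu
    have : (0:ℝ) < u := hu
    positivity

lemma Jint_rec_split {α β : ℝ} (hα : 0 < α) (hαβ : α < β) :
    Jint α β = Jint α (β + 1) + Jint (α + 1) (β + 1) := by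
  have h1 := Jint_integrable hα (show α < β + 1 by linarith)
  have h2 := Jint_integrable (show (0:ℝ) < α + 1 by linarith)
    (show α + 1 < β + 1 by linarith)
  rw [Jint, Jint, Jint, ← integral_add h1 h2]
  apply setIntegral_congr_fun measurableSet_Ioi
  intro u hu
  have hu0 : (0:ℝ) < u := hu
  have h1u : (0:ℝ) < 1 + u := by linarith
  show u ^ (α - 1) * (1 + u) ^ (-β)
      = u ^ (α - 1) * (1 + u) ^ (-(β + 1)) + u ^ (α + 1 - 1) * (1 + u) ^ (-(β + 1))
  have key : (1 + u) ^ (-β) = (1 + u) ^ (-(β + 1)) * (1 + u) := by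
    rw [← Real.rpow_add_one h1u.ne']
    ring_nf
  have hu' : u ^ (α + 1 - 1) = u ^ (α - 1) * u := by
    rw [← Real.rpow_add_one hu0.ne']
    ring_nf
  rw [key, hu']
  ring

set_option maxHeartbeats 1000000 in
lemma Jint_rec_ibp {α β : ℝ} (hα : 0 < α) (hαβ : α < β) :
    α * Jint α β = β * Jint (α + 1) (β + 1) := by
  have hderiv : ∀ u ∈ Ioi (0:ℝ), HasDerivAt (fun u : ℝ => u ^ α * (1 + u) ^ (-β))
      (α * (u ^ (α - 1) * (1 + u) ^ (-β))
        - β * (u ^ (α + 1 - 1) * (1 + u) ^ (-(β + 1)))) u := by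
    intro u hu
    have hu0 : (0:ℝ) < u := hu
    have h1u : (0:ℝ) < 1 + u := by linarith
    have d1 : HasDerivAt (fun u : ℝ => u ^ α) (α * u ^ (α - 1)) u :=
      Real.hasDerivAt_rpow_const (Or.inl hu0.ne')
    have dd : HasDerivAt (fun u : ℝ => 1 + u) 1 u := by
      simpa using (hasDerivAt_id u).const_add (1:ℝ)
    have d2 := dd.rpow_const (p := -β) (Or.inl h1u.ne')
    have := d1.mul d2
    refine this.congr_deriv ?_
    have e1 : u ^ (α + 1 - 1) = u ^ α := by congr 1; ring
    have e2 : (1 + u) ^ (-(β + 1)) = (1 + u) ^ (-β - 1) := by congr 1; ring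
    rw [e1, e2]
    ring
  have hcont : ContinuousWithinAt (fun u : ℝ => u ^ α * (1 + u) ^ (-β)) (Ici 0) 0 := by
    apply ContinuousWithinAt.mul
    · exact (Real.continuousAt_rpow_const 0 α (Or.inr hα.le)).continuousWithinAt
    · apply ContinuousAt.continuousWithinAt
      have h : ContinuousAt (fun u : ℝ => 1 + u) 0 := by fun_prop
      exact (Real.continuousAt_rpow_const _ _ (Or.inl (by norm_num))).comp h
  have hi1 := Jint_integrable hα hαβ
  have hi2 := Jint_integrable (show (0:ℝ) < α + 1 by linarith)
    (show α + 1 < β + 1 by linarith)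
  have hF'int : IntegrableOn (fun u : ℝ => α * (u ^ (α - 1) * (1 + u) ^ (-β))
        - β * (u ^ (α + 1 - 1) * (1 + u) ^ (-(β + 1)))) (Ioi 0) :=
    (hi1.const_mul α).sub (hi2.const_mul β)
  have htop : Tendsto (fun u : ℝ => u ^ α * (1 + u) ^ (-β)) atTop (𝓝 0) := by
    have hle : ∀ᶠ u : ℝ in atTop, u ^ α * (1 + u) ^ (-β) ≤ u ^ (α - β) := by
      filter_upwards [eventually_ge_atTop (1:ℝ)] with u hu
      have hu0 : (0:ℝ) < u := by linarith
      have : (1 + u) ^ (-β) ≤ u ^ (-β) :=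
        Real.rpow_le_rpow_of_nonpos hu0 (by linarith) (by linarith)
      calc u ^ α * (1 + u) ^ (-β) ≤ u ^ α * u ^ (-β) :=
            mul_le_mul_of_nonneg_left this (by positivity)
        _ = u ^ (α - β) := by rw [← Real.rpow_add hu0]; ring_nf
    have hge : ∀ᶠ u : ℝ in atTop, (0:ℝ) ≤ u ^ α * (1 + u) ^ (-β) := by
      filter_upwards [eventually_ge_atTop (1:ℝ)] with u hu
      have hu0 : (0:ℝ) < u := by linarith
      have h1u : (0:ℝ) < 1 + u := by linarith
      positivity
    have h0 : Tendsto (fun u : ℝ => u ^ (α - β)) atTop (𝓝 0) := by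
      have := tendsto_rpow_neg_atTop (y := β - α) (by linarith)
      simpa [neg_sub] using this
    exact squeeze_zero' hge hle h0
  have key := integral_Ioi_of_hasDerivAt_of_tendsto hcont hderiv hF'int htop
  have hF0 : (0:ℝ) ^ α * (1 + (0:ℝ)) ^ (-β) = 0 := by
    simp [Real.zero_rpow hα.ne']
  rw [hF0, sub_zero] at key
  have hsub := integral_sub (hi1.const_mul α) (hi2.const_mul β)
  rw [key] at hsub
  rw [integral_const_mul, integral_const_mul] at hsub
  have h0 : (0:ℝ) = α * Jint α β - β * Jint (α + 1) (β + 1) := hsub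
  linarith

lemma Jint_ratio {a b : ℝ} (ha : 0 < a) (hab : a < b) :
    Jint (a + 1) (b + 2) = a * (b - a) / ((b + 1) * b) * Jint a b := by
  have hb : 0 < b := lt_trans ha hab
  have h1 : a * Jint a (b + 1) = (b + 1) * Jint (a + 1) (b + 2) := by
    have := Jint_rec_ibp ha (show a < b + 1 by linarith)
    convert this using 3 <;> ring
  have h2 : a * Jint a b = b * Jint (a + 1) (b + 1) := Jint_rec_ibp ha hab
  have h3 : Jint a b = Jint a (b + 1) + Jint (a + 1) (b + 1) := Jint_rec_split ha hab
  have hbb : ((b + 1) * b) ≠ 0 := by positivity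
  rw [div_mul_eq_mul_div, eq_div_iff hbb]
  linear_combination (-b) * h1 - a * b * h3 + a * h2

lemma aux_int {c m β : ℝ} (hc : 0 < c) :
    ∫ y in Ioi (0:ℝ), y ^ m * (1 + y ^ c) ^ (-β) = (1/c) * Jint ((m+1)/c) β := by
  have key := integral_comp_rpow_Ioi
    (fun u : ℝ => (1/c) * (u ^ ((m+1)/c - 1) * (1 + u) ^ (-β))) hc.ne'
  rw [Jint, ← integral_const_mul, ← key]
  apply setIntegral_congr_fun measurableSet_Ioi
  intro x hx
  have hx0 : (0:ℝ) < x := hx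
  have hxc : (0:ℝ) < x ^ c := rpow_pos_of_pos hx0 c
  show x ^ m * (1 + x ^ c) ^ (-β)
      = (|c| * x ^ (c - 1)) • ((1/c) * ((x ^ c) ^ ((m+1)/c - 1) * (1 + x ^ c) ^ (-β)))
  rw [smul_eq_mul, abs_of_pos hc]
  rw [← Real.rpow_mul hx0.le]
  have : c * ((m+1)/c - 1) = m + 1 - c := by field_simp
  rw [this]
  have hxx : x ^ (c-1) * x ^ (m+1-c) = x ^ m := by
    rw [← Real.rpow_add hx0]; congr 1; ring
  rw [← hxx]
  field_simp

lemma euclid_radial (n : ℕ) (hn : 5 ≤ n) (g : ℝ → ℝ) :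
    ∫ X : EuclideanSpace ℝ (Fin n), g ‖X‖
      = (n:ℝ) * (volume (Metric.ball (0 : EuclideanSpace ℝ (Fin n)) 1)).toReal *
        ∫ y in Ioi (0:ℝ), y ^ (n-1 : ℕ) * g y := by
  haveI : NeZero n := ⟨by omega⟩
  haveI : Nontrivial (EuclideanSpace ℝ (Fin n)) := inferInstance
  have key := MeasureTheory.integral_fun_norm_addHaar
    (volume : Measure (EuclideanSpace ℝ (Fin n))) g
  rw [key, finrank_euclideanSpace_fin]
  simp only [nsmul_eq_mul, smul_eq_mul, measureReal_def]
  ring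

end Aux

section Main
open Real Set Filter Topology

theorem stmt_5 (n : ℕ) (hn : 5 ≤ n) (s : ℝ) (hs0 : 0 < s) (hs2 : s < 2) :
    (∫ X : EuclideanSpace ℝ (Fin n), ‖X‖ ^ (2 - s) * (U1 n s X) ^ (critExp n s)) /
        (∫ X : EuclideanSpace ℝ (Fin n), (U1 n s X) ^ 2) =
      kappa n s ^ (critExp n s - 2) *
        ((n : ℝ) * ((n : ℝ) - 4) / (2 * ((n : ℝ) - 2) * (2 * (n : ℝ) - 2 - s))) := by
  have h2s : (0:ℝ) < 2 - s := by linarith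
  have hn5 : (5:ℝ) ≤ (n:ℝ) := by exact_mod_cast hn
  have hn2 : (0:ℝ) < (n:ℝ) - 2 := by linarith
  have hns : (0:ℝ) < (n:ℝ) - s := by linarith
  set p : ℝ := ((n:ℝ) - 2) / (2 - s) with hp
  set q : ℝ := critExp n s with hq
  set κ : ℝ := kappa n s with hκdef
  have hκ : 0 < κ := Real.rpow_pos_of_pos (by positivity) _
  set a : ℝ := (n:ℝ) / (2 - s) with hadef
  set b : ℝ := 2 * ((n:ℝ) - 2) / (2 - s) with hbdef
  have ha : 0 < a := by positivity
  have hab : a < b := by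
    rw [hadef, hbdef]
    rw [div_lt_div_iff₀ h2s h2s]; nlinarith
  have hb0 : 0 < b := ha.trans hab
  set vb : ℝ := (volume (Metric.ball (0 : EuclideanSpace ℝ (Fin n)) 1)).toReal with hvb
  have hvb0 : 0 < vb := by
    rw [hvb]
    apply ENNReal.toReal_pos
    · exact (Metric.measure_ball_pos volume 0 one_pos).ne'
    · exact measure_ball_lt_top.ne
  have hpq : p * q = b + 2 := by
    rw [hp, hq, hbdef, critExp]
    field_simp
    ring
  have h2p : 2 * p = b := by rw [hp, hbdef]; ring
  -- numerator
  have hnum : (∫ X : EuclideanSpace ℝ (Fin n), ‖X‖ ^ (2 - s) * (U1 n s X) ^ q)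
      = κ ^ q * ((n:ℝ) * vb * ((1/(2-s)) * Jint (a+1) (b+2))) := by
    have step1 : (∫ X : EuclideanSpace ℝ (Fin n), ‖X‖ ^ (2 - s) * (U1 n s X) ^ q)
        = ∫ X : EuclideanSpace ℝ (Fin n),
            κ ^ q * ((fun r : ℝ => r ^ (2-s) * (1 + r ^ (2-s)) ^ (-(p*q))) ‖X‖) := by
      apply integral_congr_ae
      filter_upwards with X
      have h0 : (0:ℝ) ≤ ‖X‖ := norm_nonneg X
      have hbase : (0:ℝ) ≤ 1 + ‖X‖ ^ (2-s) := by positivity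
      show ‖X‖ ^ (2 - s) * (U1 n s X) ^ q
          = κ ^ q * (‖X‖ ^ (2-s) * (1 + ‖X‖ ^ (2-s)) ^ (-(p*q)))
      rw [U1]
      rw [Real.mul_rpow hκ.le (Real.rpow_nonneg hbase _)]
      rw [← Real.rpow_mul hbase, neg_mul]
      show ‖X‖ ^ (2 - s) * (κ ^ q * (1 + ‖X‖ ^ (2-s)) ^ (-(p*q)))
          = κ ^ q * (‖X‖ ^ (2-s) * (1 + ‖X‖ ^ (2-s)) ^ (-(p*q)))
      ring
    rw [step1, integral_const_mul,
      euclid_radial n hn (fun r : ℝ => r ^ (2-s) * (1 + r ^ (2-s)) ^ (-(p*q)))]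
    have step2 : ∫ y in Ioi (0:ℝ),
        y ^ (n-1 : ℕ) * ((fun r : ℝ => r ^ (2-s) * (1 + r ^ (2-s)) ^ (-(p*q))) y)
        = ∫ y in Ioi (0:ℝ), y ^ ((n:ℝ)+1-s) * (1 + y ^ (2-s)) ^ (-(p*q)) := by
      apply setIntegral_congr_fun measurableSet_Ioi
      intro y hy
      have hy0 : (0:ℝ) < y := hy
      show y ^ (n-1 : ℕ) * (y ^ (2-s) * (1 + y ^ (2-s)) ^ (-(p*q)))
          = y ^ ((n:ℝ)+1-s) * (1 + y ^ (2-s)) ^ (-(p*q))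
      have h1 : (y:ℝ) ^ (n-1:ℕ) = y ^ ((n:ℝ)-1) := by
        rw [← Real.rpow_natCast y (n-1)]
        congr 1
        push_cast [Nat.cast_sub (by omega : 1 ≤ n)]
        ring
      rw [h1, ← mul_assoc, ← Real.rpow_add hy0]
      congr 2
      ring
    rw [step2, aux_int h2s]
    rw [show ((n:ℝ)+1-s+1)/(2-s) = a + 1 by rw [hadef]; field_simp; ring, hpq]
  -- denominator
  have hden : (∫ X : EuclideanSpace ℝ (Fin n), (U1 n s X) ^ 2)
      = κ ^ 2 * ((n:ℝ) * vb * ((1/(2-s)) * Jint a b)) := by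
    have step1 : (∫ X : EuclideanSpace ℝ (Fin n), (U1 n s X) ^ 2)
        = ∫ X : EuclideanSpace ℝ (Fin n),
            κ ^ 2 * ((fun r : ℝ => (1 + r ^ (2-s)) ^ (-(2*p))) ‖X‖) := by
      apply integral_congr_ae
      filter_upwards with X
      have h0 : (0:ℝ) ≤ ‖X‖ := norm_nonneg X
      have hbase : (0:ℝ) ≤ 1 + ‖X‖ ^ (2-s) := by positivity
      show (U1 n s X) ^ 2 = κ ^ 2 * (1 + ‖X‖ ^ (2-s)) ^ (-(2*p))
      rw [U1, mul_pow]
      congr 1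
      rw [← Real.rpow_natCast ((1 + ‖X‖ ^ (2-s)) ^ (-p)) 2, ← Real.rpow_mul hbase]
      congr 1
      push_cast
      ring
    rw [step1, integral_const_mul,
      euclid_radial n hn (fun r : ℝ => (1 + r ^ (2-s)) ^ (-(2*p)))]
    have step2 : ∫ y in Ioi (0:ℝ),
        y ^ (n-1 : ℕ) * ((fun r : ℝ => (1 + r ^ (2-s)) ^ (-(2*p))) y)
        = ∫ y in Ioi (0:ℝ), y ^ ((n:ℝ)-1) * (1 + y ^ (2-s)) ^ (-(2*p)) := by
      apply setIntegral_congr_fun measurableSet_Ioi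
      intro y hy
      have hy0 : (0:ℝ) < y := hy
      show y ^ (n-1 : ℕ) * ((1 + y ^ (2-s)) ^ (-(2*p)))
          = y ^ ((n:ℝ)-1) * (1 + y ^ (2-s)) ^ (-(2*p))
      congr 1
      rw [← Real.rpow_natCast y (n-1)]
      congr 1
      push_cast [Nat.cast_sub (by omega : 1 ≤ n)]
      ring
    rw [step2, aux_int h2s]
    rw [show ((n:ℝ)-1+1)/(2-s) = a by rw [hadef]; ring_nf, h2p]
  rw [hnum, hden, Jint_ratio ha hab]
  have hJ : 0 < Jint a b := Jint_pos ha hab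
  have hκq : κ ^ q = κ ^ (q-2) * κ ^ 2 := by
    rw [← Real.rpow_natCast κ 2, ← Real.rpow_add hκ]
    norm_num
  have hn0 : (0:ℝ) < (n:ℝ) := by linarith
  have hd2 : (2*(n:ℝ)-2-s) ≠ 0 := by nlinarith
  have hR : a*(b-a)/((b+1)*b) = (n:ℝ)*((n:ℝ)-4)/(2*((n:ℝ)-2)*(2*(n:ℝ)-2-s)) := by
    rw [hadef, hbdef]
    field_simp [hd2, (by linarith : (0:ℝ) < 2*((n:ℝ)-1)-s).ne']
    ring
  rw [hκq, hR]
  field_simp [hκ.ne', hvb0.ne', hJ.ne', hn0.ne', hn2.ne', hd2]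

end Main
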